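/- arXiv:1109.0745 — 4 statements merged into one kernel-verified Lean document; each statement's English description precedes it below -/
import Mathlib

section
/- The positive solutions without zeros of the ODE f''·f - (f')² = -ξ² (ξ > 0) on an interval are exactly the functions f(r) = (ξ/α)·sin(αr+β), f(r) = ±(ξ/α)·sinh(αr+β), and f(r) = ±ξ·r + β, for real constants α ≠ 0 and β, restricted to intervals where f ≠ 0. -/
open Set Real

/-- A function with zero derivative on an open convex set is constant there. -/
lemma aux_const {s : Set ℝ} (hs : IsOpen s) (hc : Convex ℝ s) {g : ℝ → ℝ}
    (h : ∀ r ∈ s, HasDerivAt g 0 r) {x y : ℝ} (hx : x ∈ s) (hy : y ∈ s) : g x = g y := by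
  apply hc.is_const_of_fderivWithin_eq_zero
    (fun r hr => ((h r hr).differentiableAt).differentiableWithinAt) ?_ hx hy
  intro r hr
  rw [fderivWithin_of_isOpen hs hr, (h r hr).hasFDerivAt.fderiv]
  ext; simp

lemma aux_deriv_congr {s : Set ℝ} (hs : IsOpen s) {f g : ℝ → ℝ}
    (h : ∀ r ∈ s, f r = g r) {x : ℝ} (hx : x ∈ s) : deriv f x = deriv g x :=
  Filter.EventuallyEq.deriv_eq (Filter.eventuallyEq_of_mem (hs.mem_nhds hx) h)

lemma aux_two {s : Set ℝ} (hs : IsOpen s) {f F F1 F2 : ℝ → ℝ}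
    (heq : ∀ r ∈ s, f r = F r)
    (h1 : ∀ r, HasDerivAt F (F1 r) r) (h2 : ∀ r, HasDerivAt F1 (F2 r) r)
    {x : ℝ} (hx : x ∈ s) :
    deriv f x = F1 x ∧ deriv (deriv f) x = F2 x := by
  have hd1 : ∀ r ∈ s, deriv f r = F1 r := fun r hr => by
    rw [aux_deriv_congr hs heq hr, (h1 r).deriv]
  refine ⟨hd1 x hx, ?_⟩
  rw [aux_deriv_congr hs hd1 hx, (h2 x).deriv]

lemma aux_rev {a b ξ : ℝ} {f F F1 F2 : ℝ → ℝ} (heq : ∀ r ∈ Set.Ioo a b, f r = F r)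
    (h1 : ∀ x, HasDerivAt F (F1 x) x) (h2 : ∀ x, HasDerivAt F1 (F2 x) x)
    (hode : ∀ x, F2 x * F x - F1 x ^ 2 = -ξ ^ 2) :
    ∀ r ∈ Set.Ioo a b, deriv (deriv f) r * f r - deriv f r ^ 2 = -ξ ^ 2 := by
  intro r hr
  obtain ⟨e1, e2⟩ := aux_two isOpen_Ioo heq h1 h2 hr
  rw [e1, e2, heq r hr]
  exact hode r

/-- Classification of zero-free solutions of `f''·f - (f')² = -ξ²`. -/
theorem stmt_2 (a b ξ : ℝ) (hab : a < b) (hξ : 0 < ξ) (f : ℝ → ℝ)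
    (hf : ContDiffOn ℝ 2 f (Set.Ioo a b))
    (hne : ∀ r ∈ Set.Ioo a b, f r ≠ 0) :
    (∀ r ∈ Set.Ioo a b, deriv (deriv f) r * f r - (deriv f r) ^ 2 = -ξ ^ 2) ↔
    ∃ α β : ℝ, α ≠ 0 ∧
      ((∀ r ∈ Set.Ioo a b, f r = ξ / α * Real.sin (α * r + β)) ∨
       (∀ r ∈ Set.Ioo a b, f r = ξ / α * Real.sinh (α * r + β)) ∨
       (∀ r ∈ Set.Ioo a b, f r = -(ξ / α) * Real.sinh (α * r + β)) ∨
       (∀ r ∈ Set.Ioo a b, f r = ξ * r + β) ∨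
       (∀ r ∈ Set.Ioo a b, f r = -ξ * r + β)) := by
  constructor
  · -- forward direction
    intro hode
    have hs : IsOpen (Set.Ioo a b) := isOpen_Ioo
    have hc : Convex ℝ (Set.Ioo a b) := convex_Ioo a b
    set r₀ : ℝ := (a + b) / 2 with hr0def
    have hr₀ : r₀ ∈ Set.Ioo a b := ⟨by simp only [hr0def]; linarith, by simp only [hr0def]; linarith⟩
    have hF : ∀ r ∈ Set.Ioo a b, HasDerivAt f (deriv f r) r := fun r hr =>
      ((hf.contDiffAt (hs.mem_nhds hr)).differentiableAt (by norm_num)).hasDerivAt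
    have hf1 : ContDiffOn ℝ 1 (deriv f) (Set.Ioo a b) := hf.deriv_of_isOpen hs (by norm_num)
    have hF' : ∀ r ∈ Set.Ioo a b, HasDerivAt (deriv f) (deriv (deriv f) r) r := fun r hr =>
      ((hf1.contDiffAt (hs.mem_nhds hr)).differentiableAt (by norm_num)).hasDerivAt
    -- k := (f'² - ξ²)/f² has zero derivative
    set k : ℝ → ℝ := fun r => (deriv f r ^ 2 - ξ ^ 2) / f r ^ 2 with hkdef
    have hk : ∀ r ∈ Set.Ioo a b, HasDerivAt k 0 r := by
      intro r hr
      have hfr := hne r hr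
      have hN : HasDerivAt (fun r => deriv f r ^ 2 - ξ ^ 2)
          ((2 : ℕ) * deriv f r ^ 1 * deriv (deriv f) r) r := ((hF' r hr).pow 2).sub_const _
      have hD : HasDerivAt (fun r => f r ^ 2) ((2 : ℕ) * f r ^ 1 * deriv f r) r := (hF r hr).pow 2
      have hq := hN.div hD (pow_ne_zero 2 hfr)
      convert hq using 1
      all_goals try rfl
      have h := hode r hr
      rw [eq_comm, div_eq_zero_iff]
      left
      push_cast
      linear_combination (2 * deriv f r * f r) * h
    obtain ⟨c, hcdef⟩ : ∃ c : ℝ, k r₀ = c := ⟨k r₀, rfl⟩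
    have hkc : ∀ r ∈ Set.Ioo a b, k r = c := fun r hr =>
      (aux_const hs hc hk hr hr₀).trans hcdef
    have hsq : ∀ r ∈ Set.Ioo a b, deriv f r ^ 2 = c * f r ^ 2 + ξ ^ 2 := by
      intro r hr
      have h := hkc r hr
      have hfr := hne r hr
      simp only [hkdef] at h
      field_simp [hfr] at h
      linarith [h]
    have hf2 : ∀ r ∈ Set.Ioo a b, deriv (deriv f) r = c * f r := by
      intro r hr
      have h := hode r hr
      have h2 := hsq r hr
      have hfr := hne r hr
      have : deriv (deriv f) r * f r = c * f r * f r := by nlinarith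
      exact mul_right_cancel₀ hfr this
    rcases lt_trichotomy c 0 with hcneg | hczero | hcpos
    · -- c < 0 : trigonometric case
      set α : ℝ := Real.sqrt (-c) with hαdef
      have hα : 0 < α := Real.sqrt_pos.mpr (by linarith)
      have hα2 : α ^ 2 = -c := Real.sq_sqrt (by linarith)
      set p : ℝ → ℝ := fun r => α * f r * Real.cos (α * r) - deriv f r * Real.sin (α * r)
        with hpdef
      set q : ℝ → ℝ := fun r => α * f r * Real.sin (α * r) + deriv f r * Real.cos (α * r)
        with hqdef
      have hlin : ∀ x : ℝ, HasDerivAt (fun r : ℝ => α * r) (α * 1) x := fun x =>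
        (hasDerivAt_id x).const_mul α
      have hp0 : ∀ r ∈ Set.Ioo a b, HasDerivAt p 0 r := by
        intro r hr
        have h1 := ((hF r hr).const_mul α).mul (hlin r).cos
        have h2 := (hF' r hr).mul (hlin r).sin
        have h3 := h1.sub h2
        convert h3 using 1
        all_goals try rfl
        rw [hf2 r hr, show c = -α ^ 2 from by linarith]
        ring
      have hq0 : ∀ r ∈ Set.Ioo a b, HasDerivAt q 0 r := by
        intro r hr
        have h1 := ((hF r hr).const_mul α).mul (hlin r).sin
        have h2 := (hF' r hr).mul (hlin r).cos
        have h3 := h1.add h2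
        convert h3 using 1
        all_goals try rfl
        rw [hf2 r hr, show c = -α ^ 2 from by linarith]
        ring
      obtain ⟨P, hPdef⟩ : ∃ P : ℝ, p r₀ = P := ⟨p r₀, rfl⟩
      obtain ⟨Q, hQdef⟩ : ∃ Q : ℝ, q r₀ = Q := ⟨q r₀, rfl⟩
      have hpP : ∀ r ∈ Set.Ioo a b, p r = P := fun r hr =>
        (aux_const hs hc hp0 hr hr₀).trans hPdef
      have hqQ : ∀ r ∈ Set.Ioo a b, q r = Q := fun r hr =>
        (aux_const hs hc hq0 hr hr₀).trans hQdef
      have hfPQ : ∀ r ∈ Set.Ioo a b,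
          α * f r = P * Real.cos (α * r) + Q * Real.sin (α * r) := by
        intro r hr
        rw [← hpP r hr, ← hqQ r hr, hpdef, hqdef]
        have t := Real.sin_sq_add_cos_sq (α * r)
        simp only
        linear_combination (-(α * f r)) * t
      have hPQ : P ^ 2 + Q ^ 2 = ξ ^ 2 := by
        have t := Real.sin_sq_add_cos_sq (α * r₀)
        have h0 := hsq r₀ hr₀
        rw [← hPdef, ← hQdef, hpdef, hqdef]
        simp only
        linear_combination ((α * f r₀) ^ 2 + deriv f r₀ ^ 2) * t + h0 + (f r₀ ^ 2) * hα2
      set z : ℂ := Complex.I * P + Q with hzdef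
      have hzre : z.re = Q := by simp [hzdef]
      have hzim : z.im = P := by simp [hzdef]
      have habs : ‖z‖ = ξ := by
        rw [Complex.norm_def, Complex.normSq_apply, hzre, hzim]
        rw [show Q * Q + P * P = ξ ^ 2 by linarith [hPQ]]
        exact Real.sqrt_sq hξ.le
      set β : ℝ := Complex.arg z with hβdef
      have hQβ : Q = ξ * Real.cos β := by
        have := Complex.norm_mul_cos_arg z
        rw [habs, hzre] at this
        linarith
      have hPβ : P = ξ * Real.sin β := by
        have := Complex.norm_mul_sin_arg z
        rw [habs, hzim] at this
        linarith
      refine ⟨α, β, hα.ne', Or.inl fun r hr => ?_⟩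
      have key := hfPQ r hr
      rw [hPβ, hQβ] at key
      rw [Real.sin_add]
      field_simp
      linear_combination key
    · -- c = 0 : linear case
      have hF'0 : ∀ r ∈ Set.Ioo a b, HasDerivAt (deriv f) 0 r := fun r hr => by
        have := hF' r hr
        rwa [hf2 r hr, hczero, zero_mul] at this
      set m : ℝ := deriv f r₀ with hmdef
      have hm : ∀ r ∈ Set.Ioo a b, deriv f r = m := fun r hr => aux_const hs hc hF'0 hr hr₀
      have hm2 : m ^ 2 = ξ ^ 2 := by
        have := hsq r₀ hr₀
        rw [hczero] at this
        simpa using this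
      have hg : ∀ r ∈ Set.Ioo a b, HasDerivAt (fun r => f r - m * r) 0 r := by
        intro r hr
        have := (hF r hr).sub ((hasDerivAt_id r).const_mul m)
        rw [hm r hr, mul_one, sub_self] at this
        exact this
      have hlin : ∀ r ∈ Set.Ioo a b, f r = m * r + (f r₀ - m * r₀) := by
        intro r hr
        have := aux_const hs hc hg hr hr₀
        try simp only at this
        linarith
      have hmor : m = ξ ∨ m = -ξ := by
        have h : (m - ξ) * (m + ξ) = 0 := by linear_combination hm2
        rcases mul_eq_zero.mp h with h | h
        · left; linarith
        · right; linarith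
      rcases hmor with hmξ | hmξ
      · exact ⟨1, f r₀ - m * r₀, one_ne_zero, Or.inr (Or.inr (Or.inr (Or.inl fun r hr => by
          rw [hlin r hr, hmξ])))⟩
      · exact ⟨1, f r₀ - m * r₀, one_ne_zero, Or.inr (Or.inr (Or.inr (Or.inr fun r hr => by
          rw [hlin r hr, hmξ])))⟩
    · -- c > 0 : hyperbolic case
      set α : ℝ := Real.sqrt c with hαdef
      have hα : 0 < α := Real.sqrt_pos.mpr hcpos
      have hα2 : α ^ 2 = c := Real.sq_sqrt hcpos.le
      have hg0 : ∀ r ∈ Set.Ioo a b,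
          HasDerivAt (fun r => (deriv f r + α * f r) * Real.exp (-(α * r))) 0 r := by
        intro r hr
        have h1 := (hF' r hr).add ((hF r hr).const_mul α)
        have h2 := (((hasDerivAt_id r).const_mul α).neg).exp
        have h3 := h1.mul h2
        convert h3 using 1
        all_goals try rfl
        simp only [Pi.add_apply, Pi.sub_apply, Pi.neg_apply, id]
        rw [hf2 r hr, ← hα2]
        ring
      have hh0 : ∀ r ∈ Set.Ioo a b,
          HasDerivAt (fun r => (deriv f r - α * f r) * Real.exp (α * r)) 0 r := by
        intro r hr
        have h1 := (hF' r hr).sub ((hF r hr).const_mul α)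
        have h2 := ((hasDerivAt_id r).const_mul α).exp
        have h3 := h1.mul h2
        convert h3 using 1
        all_goals try rfl
        simp only [Pi.add_apply, Pi.sub_apply, Pi.neg_apply, id]
        rw [hf2 r hr, ← hα2]
        ring
      set A : ℝ := (deriv f r₀ + α * f r₀) * Real.exp (-(α * r₀)) with hAdef
      set B : ℝ := (deriv f r₀ - α * f r₀) * Real.exp (α * r₀) with hBdef
      have hgA : ∀ r ∈ Set.Ioo a b, (deriv f r + α * f r) * Real.exp (-(α * r)) = A :=
        fun r hr => aux_const hs hc hg0 hr hr₀
      have hhB : ∀ r ∈ Set.Ioo a b, (deriv f r - α * f r) * Real.exp (α * r) = B :=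
        fun r hr => aux_const hs hc hh0 hr hr₀
      have hABval : A * B = ξ ^ 2 := by
        have h0 := hsq r₀ hr₀
        have he : Real.exp (-(α * r₀)) * Real.exp (α * r₀) = 1 := by
          rw [← Real.exp_add]; simp
        rw [hAdef, hBdef,
          show (deriv f r₀ + α * f r₀) * Real.exp (-(α * r₀)) *
            ((deriv f r₀ - α * f r₀) * Real.exp (α * r₀)) =
            (deriv f r₀ ^ 2 - α ^ 2 * f r₀ ^ 2) *
            (Real.exp (-(α * r₀)) * Real.exp (α * r₀)) from by ring,
          he, mul_one, hα2, h0]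
        ring
      have hA0 : A ≠ 0 := by
        intro h
        rw [h, zero_mul] at hABval
        nlinarith
      -- the key formula: 2 α f = A e^{αr} - B e^{-αr}
      have hkey : ∀ r ∈ Set.Ioo a b,
          2 * α * f r = A * Real.exp (α * r) - B * Real.exp (-(α * r)) := by
        intro r hr
        have e1 : deriv f r + α * f r = A * Real.exp (α * r) := by
          have h := hgA r hr
          rwa [Real.exp_neg, mul_inv_eq_iff_eq_mul₀ (Real.exp_ne_zero _)] at h
        have e2 : deriv f r - α * f r = B * Real.exp (-(α * r)) := by
          rw [Real.exp_neg, eq_mul_inv_iff_mul_eq₀ (Real.exp_ne_zero _)]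
          exact hhB r hr
        linear_combination e1 - e2
      rcases Ne.lt_or_gt hA0 with hAneg | hApos
      · -- A < 0 : f = -(ξ/α) sinh(αr+β)
        set β : ℝ := Real.log (-A / ξ) with hβdef
        have hAe : A = -(ξ * Real.exp β) := by
          rw [hβdef, Real.exp_log (div_pos (neg_pos.mpr hAneg) hξ)]
          field_simp
        have hBe : B = -(ξ * Real.exp (-β)) := by
          have hBval : B = ξ ^ 2 / A := by
            field_simp [hA0]
            linear_combination hABval
          rw [hBval, hβdef, Real.exp_neg, Real.exp_log (div_pos (neg_pos.mpr hAneg) hξ)]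
          field_simp
        refine ⟨α, β, hα.ne', Or.inr (Or.inr (Or.inl fun r hr => ?_))⟩
        have key := hkey r hr
        rw [hAe, hBe] at key
        rw [Real.sinh_eq,
          show α * r + β = α * r + β from rfl]
        have e1 : Real.exp (α * r + β) = Real.exp (α * r) * Real.exp β := Real.exp_add _ _
        have e2 : Real.exp (-(α * r + β)) = Real.exp (-(α * r)) * Real.exp (-β) := by
          rw [← Real.exp_add]; ring_nf
        rw [e1, e2]
        field_simp
        linear_combination key
      · -- A > 0 : f = (ξ/α) sinh(αr+β)
        set β : ℝ := Real.log (A / ξ) with hβdef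
        have hAe : A = ξ * Real.exp β := by
          rw [hβdef, Real.exp_log (div_pos hApos hξ)]
          field_simp
        have hBe : B = ξ * Real.exp (-β) := by
          have hBval : B = ξ ^ 2 / A := by
            field_simp [hA0]
            linear_combination hABval
          rw [hBval, hβdef, Real.exp_neg, Real.exp_log (div_pos hApos hξ)]
          field_simp
        refine ⟨α, β, hα.ne', Or.inr (Or.inl fun r hr => ?_)⟩
        have key := hkey r hr
        rw [hAe, hBe] at key
        rw [Real.sinh_eq]
        have e1 : Real.exp (α * r + β) = Real.exp (α * r) * Real.exp β := Real.exp_add _ _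
        have e2 : Real.exp (-(α * r + β)) = Real.exp (-(α * r)) * Real.exp (-β) := by
          rw [← Real.exp_add]; ring_nf
        rw [e1, e2]
        field_simp
        linear_combination key
  · -- reverse direction
    rintro ⟨α, β, hα, hcase⟩
    have hi : ∀ x : ℝ, HasDerivAt (fun r => α * r + β) α x := fun x => by
      simpa using ((hasDerivAt_id x).const_mul α).add_const β
    rcases hcase with h | h | h | h | h
    · refine aux_rev h (fun x => ?_) (fun x => ?_) (fun x => ?_)
        (F1 := fun x => ξ * Real.cos (α * x + β))
        (F2 := fun x => -(ξ * α) * Real.sin (α * x + β))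
      · have := ((hi x).sin).const_mul (ξ / α)
        convert this using 1 <;> (try rfl); field_simp
      · have := ((hi x).cos).const_mul ξ
        convert this using 1 <;> (try rfl); ring
      · have t := Real.sin_sq_add_cos_sq (α * x + β)
        field_simp
        linear_combination (-1) * t
    · refine aux_rev h (fun x => ?_) (fun x => ?_) (fun x => ?_)
        (F1 := fun x => ξ * Real.cosh (α * x + β))
        (F2 := fun x => (ξ * α) * Real.sinh (α * x + β))
      · have := ((hi x).sinh).const_mul (ξ / α)
        convert this using 1 <;> (try rfl); field_simp
      · have := ((hi x).cosh).const_mul ξ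
        convert this using 1 <;> (try rfl); ring
      · have t := Real.cosh_sq_sub_sinh_sq (α * x + β)
        field_simp
        linear_combination (-1) * t
    · refine aux_rev h (fun x => ?_) (fun x => ?_) (fun x => ?_)
        (F1 := fun x => -ξ * Real.cosh (α * x + β))
        (F2 := fun x => -(ξ * α) * Real.sinh (α * x + β))
      · have := ((hi x).sinh).const_mul (-(ξ / α))
        convert this using 1 <;> (try rfl); field_simp
      · have := ((hi x).cosh).const_mul (-ξ)
        convert this using 1 <;> (try rfl); ring
      · have t := Real.cosh_sq_sub_sinh_sq (α * x + β)
        field_simp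
        linear_combination (-1) * t
    · refine aux_rev h (fun x => ?_) (fun x => ?_) (fun x => ?_)
        (F1 := fun _ => ξ) (F2 := fun _ => 0)
      · simpa using ((hasDerivAt_id x).const_mul ξ).add_const β
      · exact hasDerivAt_const x ξ
      · ring
    · refine aux_rev h (fun x => ?_) (fun x => ?_) (fun x => ?_)
        (F1 := fun _ => -ξ) (F2 := fun _ => 0)
      · simpa using ((hasDerivAt_id x).const_mul (-ξ)).add_const β
      · exact hasDerivAt_const x (-ξ)
      · ring
end

section
/- The solutions without zeros of the ODE -f''·f + (f')² = h with constant h ≤ 0 on an interval are exactly: f(r) = (√(-h)/α)·cosh(αr+β) when h < 0, and f(r) = α·e^{βr} when h = 0, where α ≠ 0 and β ∈ ℝ. -/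
lemma const_on_Ioo {a b : ℝ} {g : ℝ → ℝ}
    (hg : ∀ r ∈ Set.Ioo a b, HasDerivAt g 0 r) :
    ∀ x ∈ Set.Ioo a b, ∀ y ∈ Set.Ioo a b, g x = g y := by
  intro x hx y hy
  refine (convex_Ioo a b).is_const_of_fderivWithin_eq_zero
    (fun r hr => ((hg r hr).differentiableAt).differentiableWithinAt) ?_ hx hy
  intro r hr
  rw [fderivWithin_of_isOpen isOpen_Ioo hr]
  have : HasFDerivAt g (0 : ℝ →L[ℝ] ℝ) r := by
    have := (hg r hr).hasFDerivAt
    convert this using 1 <;> try rfl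
    ext; simp
  exact this.fderiv

lemma ode_exp {a b c : ℝ} {g : ℝ → ℝ}
    (hg : ∀ r ∈ Set.Ioo a b, HasDerivAt g (c * g r) r) :
    ∀ x ∈ Set.Ioo a b, ∀ y ∈ Set.Ioo a b, g x = g y * Real.exp (c * (x - y)) := by
  intro x hx y hy
  have key : ∀ r ∈ Set.Ioo a b, HasDerivAt (fun t => g t * Real.exp (-(c*t))) 0 r := by
    intro r hr
    have he : HasDerivAt (fun t : ℝ => Real.exp (-(c*t))) (Real.exp (-(c*r)) * (-c)) r := by
      simpa using (((hasDerivAt_id r).const_mul c).neg).exp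
    have := (hg r hr).mul he
    convert this using 1 <;> try rfl
    ring
  have h1 : g x * Real.exp (-(c*x)) = g y * Real.exp (-(c*y)) :=
    const_on_Ioo key x hx y hy
  have h2 : g x = (g x * Real.exp (-(c*x))) * Real.exp (c*x) := by
    rw [mul_assoc, ← Real.exp_add]; simp
  rw [h2, h1, mul_assoc, ← Real.exp_add]
  congr 2
  ring

/-- Classification of zero-free solutions of `-f''·f + (f')² = h` with constant `h ≤ 0`. -/
theorem stmt_4 (a b h : ℝ) (hab : a < b) (hh : h ≤ 0) (f : ℝ → ℝ)
    (hf : ContDiffOn ℝ 2 f (Set.Ioo a b))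
    (hne : ∀ r ∈ Set.Ioo a b, f r ≠ 0) :
    (∀ r ∈ Set.Ioo a b, -(deriv (deriv f) r) * f r + (deriv f r) ^ 2 = h) ↔
    ((h < 0 ∧ ∃ α β : ℝ, α ≠ 0 ∧
        ∀ r ∈ Set.Ioo a b, f r = Real.sqrt (-h) / α * Real.cosh (α * r + β)) ∨
     (h = 0 ∧ ∃ α β : ℝ, α ≠ 0 ∧
        ∀ r ∈ Set.Ioo a b, f r = α * Real.exp (β * r))) := by
  set s := Set.Ioo a b with hs
  have hfd : DifferentiableOn ℝ f s := hf.differentiableOn (by norm_num)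
  have hd1 : ∀ r ∈ s, HasDerivAt f (deriv f r) r := fun r hr =>
    (hfd.differentiableAt (isOpen_Ioo.mem_nhds hr)).hasDerivAt
  have hf' : ContDiffOn ℝ 1 (deriv f) s := hf.deriv_of_isOpen isOpen_Ioo (by norm_num)
  have hd2 : ∀ r ∈ s, HasDerivAt (deriv f) (deriv (deriv f) r) r := fun r hr =>
    ((hf'.differentiableOn (by norm_num)).differentiableAt (isOpen_Ioo.mem_nhds hr)).hasDerivAt
  constructor
  · intro hode
    obtain ⟨r0, hr0def⟩ : ∃ x : ℝ, x = (a + b) / 2 := ⟨_, rfl⟩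
    have hr0 : r0 ∈ s := by rw [hr0def]; exact ⟨by linarith, by linarith⟩
    obtain ⟨u, hu_def⟩ : ∃ g : ℝ → ℝ, g = fun r => deriv f r / f r := ⟨_, rfl⟩
    have hu : ∀ r ∈ s, HasDerivAt u (-h / f r ^ 2) r := by
      intro r hr
      rw [hu_def]
      have hD := (hd2 r hr).div (hd1 r hr) (hne r hr)
      have e : -h / f r ^ 2
          = (deriv (deriv f) r * f r - deriv f r * deriv f r) / f r ^ 2 := by
        have := hode r hr
        congr 1
        nlinarith
      rw [e]
      exact hD
    rcases hh.lt_or_eq with hneg | h0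
    · -- h < 0 : cosh case
      left
      refine ⟨hneg, ?_⟩
      obtain ⟨k, hkdef⟩ : ∃ x : ℝ, x = Real.sqrt (-h) := ⟨_, rfl⟩
      have hk2 : k ^ 2 = -h := by rw [hkdef]; exact Real.sq_sqrt (by linarith)
      have hkpos : 0 < k := by rw [hkdef]; exact Real.sqrt_pos.mpr (by linarith)
      obtain ⟨v, hv_def⟩ : ∃ g : ℝ → ℝ, g = fun r => k / f r := ⟨_, rfl⟩
      have hv : ∀ r ∈ s, HasDerivAt v (-(k * deriv f r) / f r ^ 2) r := by
        intro r hr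
        rw [hv_def]
        have hD := (hasDerivAt_const r k).div (hd1 r hr) (hne r hr)
        convert hD using 1 <;> try rfl
        ring_nf
      obtain ⟨w, hw_def⟩ : ∃ g : ℝ → ℝ, g = fun r => u r ^ 2 + v r ^ 2 := ⟨_, rfl⟩
      have hw : ∀ r ∈ s, HasDerivAt w 0 r := by
        intro r hr
        rw [hw_def]
        have hD := ((hu r hr).pow 2).add ((hv r hr).pow 2)
        convert hD using 1 <;> try rfl
        rw [show -h = k ^ 2 by linarith]
        have hfr := hne r hr
        simp only [hu_def, hv_def, Nat.sub_self, pow_one]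
        field_simp
        ring
      obtain ⟨C, hCdef⟩ : ∃ x : ℝ, x = w r0 := ⟨_, rfl⟩
      have hC : ∀ r ∈ s, w r = C := fun r hr => hCdef ▸ const_on_Ioo hw r hr r0 hr0
      have hv0 : v r0 ≠ 0 := by rw [hv_def]; exact div_ne_zero hkpos.ne' (hne r0 hr0)
      have hCpos : 0 < C := by
        have h1 : 0 < v r0 ^ 2 := pow_two_pos_of_ne_zero hv0
        have h2 : 0 ≤ u r0 ^ 2 := sq_nonneg _
        simp only [hCdef, hw_def]
        linarith
      obtain ⟨α, hαdef⟩ : ∃ x : ℝ, x = Real.sqrt C := ⟨_, rfl⟩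
      have hα2 : α ^ 2 = C := by rw [hαdef]; exact Real.sq_sqrt hCpos.le
      have hαpos : 0 < α := by rw [hαdef]; exact Real.sqrt_pos.mpr hCpos
      have key : ∀ r ∈ s, deriv f r ^ 2 + k ^ 2 = C * f r ^ 2 := by
        intro r hr
        have h1 := hC r hr
        have hfr := hne r hr
        simp only [hw_def, hu_def, hv_def, div_pow] at h1
        field_simp at h1
        linarith
      have hf'' : ∀ r ∈ s, deriv (deriv f) r = C * f r := by
        intro r hr
        have h1 := hode r hr
        have h2 := key r hr
        have hfr := hne r hr
        have h3 : deriv (deriv f) r * f r = C * f r * f r := by nlinarith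
        exact mul_right_cancel₀ hfr h3
      obtain ⟨p, hp_def⟩ : ∃ g : ℝ → ℝ, g = fun r => deriv f r - α * f r := ⟨_, rfl⟩
      obtain ⟨q, hq_def⟩ : ∃ g : ℝ → ℝ, g = fun r => deriv f r + α * f r := ⟨_, rfl⟩
      have hp : ∀ r ∈ s, HasDerivAt p ((-α) * p r) r := by
        intro r hr
        rw [hp_def]
        have hD := (hd2 r hr).sub ((hd1 r hr).const_mul α)
        convert hD using 1 <;> try rfl
        rw [hf'' r hr]
        simp only [hp_def]
        linear_combination f r * hα2
      have hq : ∀ r ∈ s, HasDerivAt q (α * q r) r := by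
        intro r hr
        rw [hq_def]
        have hD := (hd2 r hr).add ((hd1 r hr).const_mul α)
        convert hD using 1 <;> try rfl
        rw [hf'' r hr]
        simp only [hq_def]
        linear_combination f r * hα2
      have hpq : p r0 * q r0 = -k ^ 2 := by
        simp only [hp_def, hq_def]
        linear_combination (key r0 hr0) - (f r0) ^ 2 * hα2
      obtain ⟨c₁, hc₁def⟩ : ∃ x : ℝ, x = q r0 * Real.exp (-(α * r0)) := ⟨_, rfl⟩
      obtain ⟨c₂, hc₂def⟩ : ∃ x : ℝ, x = p r0 * Real.exp (α * r0) := ⟨_, rfl⟩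
      have hc1c2 : c₁ * c₂ = -k ^ 2 := by
        have e1 : c₁ * c₂ = p r0 * q r0 * Real.exp (-(α * r0) + α * r0) := by
          rw [Real.exp_add, hc₁def, hc₂def]; ring
        rw [e1]
        simp [hpq]
      have hc1ne : c₁ ≠ 0 := by
        intro h0
        rw [h0, zero_mul] at hc1c2
        nlinarith
      have hc2eq : c₂ = -k ^ 2 / c₁ := by
        field_simp
        linarith [hc1c2]
      have hfe : ∀ r ∈ s,
          f r = (c₁ * Real.exp (α * r) - c₂ * Real.exp (-(α * r))) / (2 * α) := by
        intro r hr
        have hpr := ode_exp hp r hr r0 hr0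
        have hqr := ode_exp hq r hr r0 hr0
        have e1 : p r0 * Real.exp (-α * (r - r0)) = c₂ * Real.exp (-(α * r)) := by
          rw [hc₂def, mul_assoc, ← Real.exp_add]
          congr 2
          ring
        have e2 : q r0 * Real.exp (α * (r - r0)) = c₁ * Real.exp (α * r) := by
          rw [hc₁def, mul_assoc, ← Real.exp_add]
          congr 2
          ring
        rw [e1] at hpr
        rw [e2] at hqr
        have hsub : q r - p r = 2 * α * f r := by
          simp only [hp_def, hq_def]; ring
        rw [hpr, hqr] at hsub
        field_simp at hsub ⊢
        linarith
      rcases lt_trichotomy c₁ 0 with hc | hc | hc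
      · -- c₁ < 0 : use -α
        refine ⟨-α, Real.log (k / (-c₁)), neg_ne_zero.mpr hαpos.ne', ?_⟩
        intro r hr
        have hαne := hαpos.ne'
        have hkne := hkpos.ne'
        have hc1ne' : -c₁ ≠ 0 := by intro hx; apply hc1ne; linarith
        have e1 : Real.exp (Real.log (k / (-c₁))) = k / (-c₁) :=
          Real.exp_log (div_pos hkpos (by linarith))
        have E1 : Real.exp (-α * r + Real.log (k / (-c₁)))
            = Real.exp (-(α * r)) * (k / (-c₁)) := by
          rw [show -α * r + Real.log (k / (-c₁)) = -(α * r) + Real.log (k / (-c₁)) by ring,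
            Real.exp_add, e1]
        have E2 : Real.exp (-(-α * r + Real.log (k / (-c₁))))
            = Real.exp (α * r) * ((-c₁) / k) := by
          rw [show -(-α * r + Real.log (k / (-c₁))) = α * r + -Real.log (k / (-c₁)) by ring,
            Real.exp_add]
          congr 1
          rw [Real.exp_neg, e1, inv_div]
        rw [← hkdef, hfe r hr, Real.cosh_eq, hc2eq, E1, E2]
        field_simp
        ring
      · exact absurd hc hc1ne
      · -- c₁ > 0 : use α
        refine ⟨α, Real.log (c₁ / k), hαpos.ne', ?_⟩
        intro r hr
        have hαne := hαpos.ne'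
        have hkne := hkpos.ne'
        have e1 : Real.exp (Real.log (c₁ / k)) = c₁ / k :=
          Real.exp_log (div_pos hc hkpos)
        have E1 : Real.exp (α * r + Real.log (c₁ / k))
            = Real.exp (α * r) * (c₁ / k) := by
          rw [Real.exp_add, e1]
        have E2 : Real.exp (-(α * r + Real.log (c₁ / k)))
            = Real.exp (-(α * r)) * (k / c₁) := by
          rw [show -(α * r + Real.log (c₁ / k)) = -(α * r) + -Real.log (c₁ / k) by ring,
            Real.exp_add]
          congr 1
          rw [Real.exp_neg, e1, inv_div]
        rw [← hkdef, hfe r hr, Real.cosh_eq, hc2eq, E1, E2]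
        field_simp
        ring
    · -- h = 0 : exponential case
      right
      refine ⟨h0, ?_⟩
      obtain ⟨β, hβdef⟩ : ∃ x : ℝ, x = u r0 := ⟨_, rfl⟩
      have hconst : ∀ r ∈ s, u r = β := fun r hr => (const_on_Ioo
        (fun t ht => by simpa [h0] using hu t ht) r hr r0 hr0).trans hβdef.symm
      have hfe : ∀ r ∈ s, HasDerivAt f (β * f r) r := by
        intro r hr
        have h2 := hconst r hr
        simp only [hu_def] at h2
        rw [div_eq_iff (hne r hr)] at h2
        exact h2 ▸ hd1 r hr
      refine ⟨f r0 * Real.exp (-(β * r0)), β,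
        mul_ne_zero (hne r0 hr0) (Real.exp_ne_zero _), ?_⟩
      intro r hr
      rw [ode_exp hfe r hr r0 hr0,
        show β * (r - r0) = -(β * r0) + β * r by ring, Real.exp_add]
      ring
  · rintro (⟨hneg, α, β, hα, heq⟩ | ⟨h0, α, β, hα, heq⟩) <;> intro r hr
    · -- cosh case
      obtain ⟨k, hkdef⟩ : ∃ x : ℝ, x = Real.sqrt (-h) := ⟨_, rfl⟩
      rw [← hkdef] at heq
      have hk2 : k ^ 2 = -h := by rw [hkdef]; exact Real.sq_sqrt (by linarith)
      have hF : ∀ t : ℝ, HasDerivAt (fun x => k / α * Real.cosh (α * x + β))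
          (k * Real.sinh (α * t + β)) t := by
        intro t
        have hD := ((((hasDerivAt_id t).const_mul α).add_const β).cosh).const_mul (k / α)
        convert hD using 1 <;> try rfl
        field_simp
        simp only [id_eq]
      have hG : ∀ t : ℝ, HasDerivAt (fun x => k * Real.sinh (α * x + β))
          (k * (Real.cosh (α * t + β) * α)) t := by
        intro t
        have hD := ((((hasDerivAt_id t).const_mul α).add_const β).sinh).const_mul k
        convert hD using 1 <;> try rfl
        simp only [id_eq, mul_one]
      have hfd' : ∀ t ∈ s, deriv f t = k * Real.sinh (α * t + β) := by
        intro t ht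
        have heq' : f =ᶠ[nhds t] fun x => k / α * Real.cosh (α * x + β) :=
          Filter.eventually_of_mem (isOpen_Ioo.mem_nhds ht) (fun x hx => heq x hx)
        rw [heq'.deriv_eq, (hF t).deriv]
      have hfd'' : deriv (deriv f) r = k * (Real.cosh (α * r + β) * α) := by
        have heq' : deriv f =ᶠ[nhds r] fun x => k * Real.sinh (α * x + β) :=
          Filter.eventually_of_mem (isOpen_Ioo.mem_nhds hr) (fun x hx => hfd' x hx)
        rw [heq'.deriv_eq, (hG r).deriv]
      rw [hfd'', hfd' r hr, heq r hr]
      have hcs := Real.cosh_sq_sub_sinh_sq (α * r + β)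
      have hcs' : k ^ 2 * α * (Real.cosh (α * r + β) ^ 2 - Real.sinh (α * r + β) ^ 2)
          = k ^ 2 * α := by rw [hcs]; ring
      have hk2' : k ^ 2 * α = -h * α := by rw [hk2]
      field_simp
      nlinarith [hcs', hk2', hcs, hk2]
    · -- exp case
      have hF : ∀ t : ℝ, HasDerivAt (fun x => α * Real.exp (β * x))
          (α * β * Real.exp (β * t)) t := by
        intro t
        have hD := (((hasDerivAt_id t).const_mul β).exp).const_mul α
        convert hD using 1 <;> try rfl
        simp
        ring
      have hG : ∀ t : ℝ, HasDerivAt (fun x => α * β * Real.exp (β * x))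
          (α * β * β * Real.exp (β * t)) t := by
        intro t
        have hD := (((hasDerivAt_id t).const_mul β).exp).const_mul (α * β)
        convert hD using 1 <;> try rfl
        simp
        ring
      have hfd' : ∀ t ∈ s, deriv f t = α * β * Real.exp (β * t) := by
        intro t ht
        have heq' : f =ᶠ[nhds t] fun x => α * Real.exp (β * x) :=
          Filter.eventually_of_mem (isOpen_Ioo.mem_nhds ht) (fun x hx => heq x hx)
        rw [heq'.deriv_eq, (hF t).deriv]
      have hfd'' : deriv (deriv f) r = α * β * β * Real.exp (β * r) := by
        have heq' : deriv f =ᶠ[nhds r] fun x => α * β * Real.exp (β * x) :=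
          Filter.eventually_of_mem (isOpen_Ioo.mem_nhds hr) (fun x hx => hfd' x hx)
        rw [heq'.deriv_eq, (hG r).deriv]
      rw [hfd'', hfd' r hr, heq r hr, h0]
      ring
end

section
/- If Ψ is a C² function without zeros on an interval I satisfying 3Ψ''·Ψ = 4(Ψ')² on I, then there exist constants A ≠ 0 and ζ ∉ I such that either Ψ(z) = A (constant, corresponding to i = 1, Ψ(z) = A·(z-ζ)⁰) or Ψ(z) = A·(z-ζ)^{-3} on I. -/
open Set

private lemma const_of_hasDerivAt_zero {f : ℝ → ℝ} {a b : ℝ}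
    (h : ∀ z ∈ Set.Ioo a b, HasDerivAt f 0 z) :
    ∀ x ∈ Set.Ioo a b, ∀ y ∈ Set.Ioo a b, f x = f y := by
  intro x hx y hy
  refine (convex_Ioo a b).is_const_of_fderivWithin_eq_zero
    (fun z hz => ((h z hz).differentiableAt).differentiableWithinAt) (fun z hz => ?_) hx hy
  rw [fderivWithin_of_isOpen isOpen_Ioo hz, (h z hz).hasFDerivAt.fderiv]
  ext t
  simp

private lemma aux_pos (a b : ℝ) (hab : a < b) (Ψ : ℝ → ℝ)
    (hΨ : ContDiffOn ℝ 2 Ψ (Set.Ioo a b))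
    (hpos : ∀ z ∈ Set.Ioo a b, 0 < Ψ z)
    (hode : ∀ z ∈ Set.Ioo a b, 3 * deriv (deriv Ψ) z * Ψ z = 4 * (deriv Ψ z) ^ 2) :
    ∃ A ζ : ℝ, A ≠ 0 ∧ ζ ∉ Set.Ioo a b ∧
      ((∀ z ∈ Set.Ioo a b, Ψ z = A) ∨
       (∀ z ∈ Set.Ioo a b, Ψ z = A / (z - ζ) ^ 3)) := by
  have hs : IsOpen (Set.Ioo a b) := isOpen_Ioo
  -- first derivative
  have hd1 : ∀ z ∈ Set.Ioo a b, HasDerivAt Ψ (deriv Ψ z) z := by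
    intro z hz
    exact (((hΨ.differentiableOn (by norm_num)) z hz).differentiableAt
      (hs.mem_nhds hz)).hasDerivAt
  -- second derivative
  have hc1 : ContDiffOn ℝ 1 (deriv Ψ) (Set.Ioo a b) :=
    hΨ.deriv_of_isOpen hs (by norm_num)
  have hd2 : ∀ z ∈ Set.Ioo a b, HasDerivAt (deriv Ψ) (deriv (deriv Ψ) z) z := by
    intro z hz
    exact (((hc1.differentiableOn (by norm_num)) z hz).differentiableAt
      (hs.mem_nhds hz)).hasDerivAt
  set u : ℝ → ℝ := fun z => Ψ z ^ (-(1/3) : ℝ) with hu_def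
  set g : ℝ → ℝ := fun z => deriv Ψ z * (-(1/3) : ℝ) * Ψ z ^ ((-(1/3) : ℝ) - 1) with hg_def
  have hupos : ∀ z ∈ Set.Ioo a b, 0 < u z := fun z hz =>
    Real.rpow_pos_of_pos (hpos z hz) _
  have hu : ∀ z ∈ Set.Ioo a b, HasDerivAt u (g z) z := by
    intro z hz
    exact (hd1 z hz).rpow_const (Or.inl (hpos z hz).ne')
  have hg0 : ∀ z ∈ Set.Ioo a b, HasDerivAt g 0 z := by
    intro z hz
    have hne : Ψ z ≠ 0 := (hpos z hz).ne'
    have h1 : HasDerivAt (fun z => deriv Ψ z * (-(1/3) : ℝ))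
        (deriv (deriv Ψ) z * (-(1/3) : ℝ)) z := (hd2 z hz).mul_const _
    have h2 : HasDerivAt (fun z => Ψ z ^ ((-(1/3) : ℝ) - 1))
        (deriv Ψ z * ((-(1/3) : ℝ) - 1) * Ψ z ^ (((-(1/3) : ℝ) - 1) - 1)) z :=
      (hd1 z hz).rpow_const (Or.inl hne)
    have h3 := h1.mul h2
    refine HasDerivAt.congr_deriv h3 ?_
    have hsplit : Ψ z ^ ((-(1/3) : ℝ) - 1) = Ψ z ^ (((-(1/3) : ℝ) - 1) - 1) * Ψ z := by
      rw [show ((-(1/3) : ℝ) - 1) = (((-(1/3) : ℝ) - 1) - 1) + 1 by ring,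
        Real.rpow_add_one hne]
      norm_num
    have h4 := hode z hz
    rw [hsplit]
    set R := Ψ z ^ (((-(1/3) : ℝ) - 1) - 1)
    linear_combination (-(R/9)) * h4
  -- g is constant
  set z₀ : ℝ := (a + b) / 2 with hz₀_def
  have hz₀ : z₀ ∈ Set.Ioo a b := ⟨by simp [hz₀_def]; linarith, by simp [hz₀_def]; linarith⟩
  set c : ℝ := g z₀ with hc_def
  have hgc : ∀ z ∈ Set.Ioo a b, g z = c := fun z hz =>
    const_of_hasDerivAt_zero hg0 z hz z₀ hz₀
  -- u z = c z + d
  have hu' : ∀ z ∈ Set.Ioo a b, HasDerivAt (fun z => u z - c * z) 0 z := by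
    intro z hz
    have := (hu z hz).sub ((hasDerivAt_id z).const_mul c)
    rw [hgc z hz] at this
    exact this.congr_deriv (by simp)
  set d : ℝ := u z₀ - c * z₀ with hd_def
  have hlin : ∀ z ∈ Set.Ioo a b, u z = c * z + d := by
    intro z hz
    have := const_of_hasDerivAt_zero hu' z hz z₀ hz₀
    try simp only at this
    linarith [this]
  -- recover Ψ from u
  have hrec : ∀ z ∈ Set.Ioo a b, Ψ z = (u z) ^ (-3 : ℝ) := by
    intro z hz
    show Ψ z = (Ψ z ^ (-(1/3) : ℝ)) ^ (-3 : ℝ)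
    rw [← Real.rpow_mul (hpos z hz).le, show ((-(1/3) : ℝ) * (-3)) = 1 by norm_num,
      Real.rpow_one]
  by_cases hc : c = 0
  · -- constant case
    refine ⟨d ^ (-3 : ℝ), a, ?_, by simp, Or.inl ?_⟩
    · have hd : 0 < d := by
        have := hupos z₀ hz₀
        have := hlin z₀ hz₀
        rw [hc] at this
        simp at this
        linarith
      exact (Real.rpow_pos_of_pos hd _).ne'
    · intro z hz
      rw [hrec z hz, hlin z hz, hc]
      norm_num
  · -- linear case
    refine ⟨1 / c ^ 3, -d / c, one_div_ne_zero (pow_ne_zero 3 hc), fun hmem => ?_, Or.inr ?_⟩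
    · -- -d/c not in interval
      have h1 := hupos (-d/c) hmem
      have h2 := hlin (-d/c) hmem
      have h3 : c * (-d / c) + d = 0 := by field_simp; ring
      rw [h2, h3] at h1
      exact lt_irrefl 0 h1
    · intro z hz
      have h1 : u z = c * (z - (-d / c)) := by
        rw [hlin z hz]; field_simp; ring
      have h2 : 0 < c * (z - (-d / c)) := by rw [← h1]; exact hupos z hz
      have h3 : z - (-d / c) ≠ 0 := by
        intro h; rw [h, mul_zero] at h2; exact lt_irrefl 0 h2
      rw [hrec z hz, h1, Real.rpow_neg h2.le, show ((3:ℝ)) = ((3:ℕ):ℝ) by norm_num,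
        Real.rpow_natCast]
      rw [mul_pow, one_div, div_eq_mul_inv, mul_inv]
      ring

/-- Zero-free solutions of `3Ψ''Ψ = 4(Ψ')²` are `A` or `A·(z-ζ)⁻³`. -/
theorem stmt_5 (a b : ℝ) (hab : a < b) (Ψ : ℝ → ℝ)
    (hΨ : ContDiffOn ℝ 2 Ψ (Set.Ioo a b))
    (hne : ∀ z ∈ Set.Ioo a b, Ψ z ≠ 0)
    (hode : ∀ z ∈ Set.Ioo a b, 3 * deriv (deriv Ψ) z * Ψ z = 4 * (deriv Ψ z) ^ 2) :
    ∃ A ζ : ℝ, A ≠ 0 ∧ ζ ∉ Set.Ioo a b ∧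
      ((∀ z ∈ Set.Ioo a b, Ψ z = A) ∨
       (∀ z ∈ Set.Ioo a b, Ψ z = A / (z - ζ) ^ 3)) := by
  have hsign : (∀ z ∈ Set.Ioo a b, 0 < Ψ z) ∨ (∀ z ∈ Set.Ioo a b, Ψ z < 0) := by
    by_contra h
    push_neg at h
    obtain ⟨⟨x, hx, hx0⟩, ⟨y, hy, hy0⟩⟩ := h
    have hxneg : Ψ x < 0 := lt_of_le_of_ne hx0 (hne x hx)
    have hypos : 0 < Ψ y := lt_of_le_of_ne hy0 (Ne.symm (hne y hy))
    have hsub : Set.uIcc x y ⊆ Set.Ioo a b :=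
      (Set.ordConnected_Ioo).uIcc_subset hx hy
    have hcont : ContinuousOn Ψ (Set.uIcc x y) :=
      (hΨ.continuousOn).mono hsub
    have : (0 : ℝ) ∈ Set.uIcc (Ψ x) (Ψ y) :=
      Set.mem_uIcc.2 (Or.inl ⟨hxneg.le, hypos.le⟩)
    obtain ⟨z, hz, hz0⟩ := intermediate_value_uIcc hcont this
    exact hne z (hsub hz) hz0
  rcases hsign with hpos | hneg
  · exact aux_pos a b hab Ψ hΨ hpos hode
  · have hΨ' : ContDiffOn ℝ 2 (fun z => -Ψ z) (Set.Ioo a b) := hΨ.neg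
    have hdneg : deriv (fun z => -Ψ z) = fun z => -deriv Ψ z := funext fun z => deriv.neg
    have hode' : ∀ z ∈ Set.Ioo a b,
        3 * deriv (deriv (fun z => -Ψ z)) z * (-Ψ z) = 4 * (deriv (fun z => -Ψ z) z) ^ 2 := by
      intro z hz
      rw [hdneg]
      have : deriv (fun z => -deriv Ψ z) z = -deriv (deriv Ψ) z := deriv.neg
      rw [this]
      have := hode z hz
      ring_nf
      ring_nf at this
      linarith
    obtain ⟨A, ζ, hA, hζ, hcase⟩ := aux_pos a b hab (fun z => -Ψ z) hΨ'
      (fun z hz => by simpa using (hneg z hz)) hode'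
    refine ⟨-A, ζ, neg_ne_zero.2 hA, hζ, ?_⟩
    rcases hcase with h | h
    · exact Or.inl fun z hz => by have := h z hz; linarith
    · refine Or.inr fun z hz => ?_
      have := h z hz
      try simp only at this
      have : Ψ z = -(A / (z - ζ) ^ 3) := by linarith
      rw [this, neg_div]
end

section
/- For the Bertrand surface of the second type, i.e. metric in coordinates (θ, φ) given by ds² = dθ²/Q(θ)² + dφ²/(μ²Q(θ)) with Q(θ) = θ² + c − dθ^{-2}, the scalar curvature satisfies R(θ)/2 = c − 6d/θ² − 3cd/θ⁴ + 2d²/θ⁶, and R'(θ)/24 = (d/θ⁵)·Q(θ). In particular R is constant when d = 0, increasing in θ when d < 0 (on intervals where Q > 0, θ < 0), and decreasing when d > 0. -/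
lemma hQderiv (c d x : ℝ) (hx : x ≠ 0) :
    HasDerivAt (fun y : ℝ => y ^ 2 + c - d / y ^ 2) (2 * x + 2 * d / x ^ 3) x := by
  have h1 : HasDerivAt (fun y : ℝ => y ^ 2 + c) (2 * x) x := by
    simpa using (hasDerivAt_pow 2 x).add_const c
  have h2 : HasDerivAt (fun y : ℝ => d / y ^ 2) (-(2 * d / x ^ 3)) x := by
    have := (hasDerivAt_const x d).fun_div (hasDerivAt_pow 2 x) (pow_ne_zero 2 hx)
    refine this.congr_deriv ?_
    field_simp; ring
  simpa using h1.fun_sub h2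

lemma hNderiv (d x : ℝ) (hx : x ≠ 0) :
    HasDerivAt (fun y : ℝ => 2 * y + 2 * d / y ^ 3) (2 - 6 * d / x ^ 4) x := by
  have h1 : HasDerivAt (fun y : ℝ => 2 * y) 2 x := by
    simpa using (hasDerivAt_id x).const_mul 2
  have h2 : HasDerivAt (fun y : ℝ => 2 * d / y ^ 3) (-(6 * d / x ^ 4)) x := by
    have := (hasDerivAt_const x (2*d)).fun_div (hasDerivAt_pow 3 x) (pow_ne_zero 3 hx)
    refine this.congr_deriv ?_
    field_simp; ring
  simpa [sub_eq_add_neg] using h1.fun_add h2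

lemma hRderiv (c d t : ℝ) (ht : t ≠ 0) :
    HasDerivAt (fun s : ℝ => 2 * (c - 6 * d / s ^ 2 - 3 * c * d / s ^ 4 + 2 * d ^ 2 / s ^ 6))
      (24 * (d / t ^ 5) * (t ^ 2 + c - d / t ^ 2)) t := by
  have h1 := (hasDerivAt_const t (6*d)).fun_div (hasDerivAt_pow 2 t) (pow_ne_zero 2 ht)
  have h2 := (hasDerivAt_const t (3*c*d)).fun_div (hasDerivAt_pow 4 t) (pow_ne_zero 4 ht)
  have h3 := (hasDerivAt_const t (2*d^2)).fun_div (hasDerivAt_pow 6 t) (pow_ne_zero 6 ht)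
  have h := ((((hasDerivAt_const t c).fun_sub h1).fun_sub h2).fun_add h3).const_mul 2
  refine h.congr_deriv ?_
  field_simp
  ring

/-- Scalar curvature of Bertrand surfaces of the second type:
explicit formula, its derivative, and monotonicity in `θ`. -/
theorem stmt_17 (c d μ a b : ℝ) (hμ : 0 < μ) (hab : a < b)
    (θ f : ℝ → ℝ)
    (hθdiff : ContDiffOn ℝ 2 θ (Set.Ioo a b))
    (hneg : ∀ r ∈ Set.Ioo a b, θ r < 0)
    (hQpos : ∀ r ∈ Set.Ioo a b, 0 < (θ r) ^ 2 + c - d / (θ r) ^ 2)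
    (hθ' : ∀ r ∈ Set.Ioo a b, deriv θ r = (θ r) ^ 2 + c - d / (θ r) ^ 2)
    (hfdef : ∀ r ∈ Set.Ioo a b,
      f r = 1 / (μ * Real.sqrt ((θ r) ^ 2 + c - d / (θ r) ^ 2))) :
    (∀ r ∈ Set.Ioo a b,
      -2 * deriv (deriv f) r / f r
        = 2 * (c - 6 * d / (θ r) ^ 2 - 3 * c * d / (θ r) ^ 4 + 2 * d ^ 2 / (θ r) ^ 6)) ∧
    (∀ t : ℝ, t < 0 →
      deriv (fun s => 2 * (c - 6 * d / s ^ 2 - 3 * c * d / s ^ 4 + 2 * d ^ 2 / s ^ 6)) t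
        = 24 * (d / t ^ 5) * (t ^ 2 + c - d / t ^ 2)) ∧
    (d = 0 → ∀ t₁ t₂ : ℝ, t₁ < 0 → t₂ < 0 →
      2 * (c - 6 * d / t₁ ^ 2 - 3 * c * d / t₁ ^ 4 + 2 * d ^ 2 / t₁ ^ 6)
        = 2 * (c - 6 * d / t₂ ^ 2 - 3 * c * d / t₂ ^ 4 + 2 * d ^ 2 / t₂ ^ 6)) ∧
    (d < 0 → ∀ t : ℝ, t < 0 → 0 < t ^ 2 + c - d / t ^ 2 →
      0 < deriv (fun s => 2 * (c - 6 * d / s ^ 2 - 3 * c * d / s ^ 4 + 2 * d ^ 2 / s ^ 6)) t) ∧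
    (0 < d → ∀ t : ℝ, t < 0 → 0 < t ^ 2 + c - d / t ^ 2 →
      deriv (fun s => 2 * (c - 6 * d / s ^ 2 - 3 * c * d / s ^ 4 + 2 * d ^ 2 / s ^ 6)) t < 0) := by
  refine ⟨?_, fun t ht => (hRderiv c d t ht.ne).deriv, ?_, ?_, ?_⟩
  · intro r hr
    have hx0 : ∀ s ∈ Set.Ioo a b, θ s ≠ 0 := fun s hs => (hneg s hs).ne
    have hQ0 : ∀ s ∈ Set.Ioo a b, (θ s) ^ 2 + c - d / (θ s) ^ 2 ≠ 0 := fun s hs => (hQpos s hs).ne'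
    have hu0 : ∀ s ∈ Set.Ioo a b, Real.sqrt ((θ s) ^ 2 + c - d / (θ s) ^ 2) ≠ 0 :=
      fun s hs => (Real.sqrt_pos.mpr (hQpos s hs)).ne'
    have hθs : ∀ s ∈ Set.Ioo a b, HasDerivAt θ ((θ s) ^ 2 + c - d / (θ s) ^ 2) s := by
      intro s hs
      have hds : DifferentiableAt ℝ θ s :=
        (hθdiff.differentiableOn (by norm_num)).differentiableAt (isOpen_Ioo.mem_nhds hs)
      have := hds.hasDerivAt
      rwa [hθ' s hs] at this
    have hsqrt : ∀ s ∈ Set.Ioo a b, HasDerivAt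
        (fun u => Real.sqrt ((θ u) ^ 2 + c - d / (θ u) ^ 2))
        (1 / (2 * Real.sqrt ((θ s) ^ 2 + c - d / (θ s) ^ 2)) *
          ((2 * θ s + 2 * d / (θ s) ^ 3) * ((θ s) ^ 2 + c - d / (θ s) ^ 2))) s := by
      intro s hs
      have hcomp : HasDerivAt (fun u => (θ u) ^ 2 + c - d / (θ u) ^ 2)
          ((2 * θ s + 2 * d / (θ s) ^ 3) * ((θ s) ^ 2 + c - d / (θ s) ^ 2)) s :=
        (hQderiv c d (θ s) (hx0 s hs)).comp s (hθs s hs)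
      exact (Real.hasDerivAt_sqrt (hQ0 s hs)).comp s hcomp
    -- first derivative of f
    set F : ℝ → ℝ := fun s => -(1/2) * (2 * θ s + 2 * d / (θ s) ^ 3) * f s with hF
    have hfF : ∀ s ∈ Set.Ioo a b, HasDerivAt f (F s) s := by
      intro s hs
      have hden : HasDerivAt (fun u => μ * Real.sqrt ((θ u) ^ 2 + c - d / (θ u) ^ 2))
          (μ * (1 / (2 * Real.sqrt ((θ s) ^ 2 + c - d / (θ s) ^ 2)) *
            ((2 * θ s + 2 * d / (θ s) ^ 3) * ((θ s) ^ 2 + c - d / (θ s) ^ 2)))) s :=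
        (hsqrt s hs).const_mul μ
      have hg := (hasDerivAt_const s (1:ℝ)).fun_div hden
        (by exact mul_ne_zero hμ.ne' (hu0 s hs))
      have hg' : HasDerivAt (fun u => 1 / (μ * Real.sqrt ((θ u) ^ 2 + c - d / (θ u) ^ 2))) (F s) s := by
        refine hg.congr_deriv ?_
        rw [hF]
        simp only
        rw [hfdef s hs]
        set u := Real.sqrt ((θ s) ^ 2 + c - d / (θ s) ^ 2) with hudef
        have hu : u ^ 2 = (θ s) ^ 2 + c - d / (θ s) ^ 2 := Real.sq_sqrt (hQpos s hs).le
        rw [← hu]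
        have hune : u ≠ 0 := hu0 s hs
        field_simp
        ring
      refine hg'.congr_of_eventuallyEq ?_
      filter_upwards [isOpen_Ioo.mem_nhds hs] with w hw
      exact hfdef w hw
    have hdf : deriv f =ᶠ[nhds r] F := by
      filter_upwards [isOpen_Ioo.mem_nhds hr] with s hs
      exact (hfF s hs).deriv
    -- second derivative
    have hFd : HasDerivAt F
        ((-(1/2) * (2 - 6 * d / (θ r) ^ 4) * ((θ r) ^ 2 + c - d / (θ r) ^ 2)) * f r
          + (-(1/2) * (2 * θ r + 2 * d / (θ r) ^ 3)) * F r) r := by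
      have h1 : HasDerivAt (fun s => -(1/2) * (2 * θ s + 2 * d / (θ s) ^ 3))
          (-(1/2) * ((2 - 6 * d / (θ r) ^ 4) * ((θ r) ^ 2 + c - d / (θ r) ^ 2))) r :=
        (((hNderiv d (θ r) (hx0 r hr)).comp r (hθs r hr))).const_mul (-(1/2))
      have h2 := h1.fun_mul (hfF r hr)
      refine h2.congr_deriv ?_
      ring
    have hd2 : deriv (deriv f) r
        = (-(1/2) * (2 - 6 * d / (θ r) ^ 4) * ((θ r) ^ 2 + c - d / (θ r) ^ 2)) * f r
          + (-(1/2) * (2 * θ r + 2 * d / (θ r) ^ 3)) * F r := by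
      rw [hdf.deriv_eq]
      exact hFd.deriv
    rw [hd2, hF]
    simp only
    rw [hfdef r hr]
    set u := Real.sqrt ((θ r) ^ 2 + c - d / (θ r) ^ 2) with hudef
    have hune : u ≠ 0 := hu0 r hr
    have hxne : θ r ≠ 0 := hx0 r hr
    field_simp
    ring
  · intro hd t₁ t₂ _ _
    simp [hd]
  · intro hd t ht hQ
    rw [(hRderiv c d t ht.ne).deriv]
    have h5 : t ^ 5 < 0 := Odd.pow_neg (by decide) ht
    have : (0:ℝ) < d / t ^ 5 := div_pos_of_neg_of_neg hd h5
    positivity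
  · intro hd t ht hQ
    rw [(hRderiv c d t ht.ne).deriv]
    have h5 : t ^ 5 < 0 := Odd.pow_neg (by decide) ht
    have h1 : d / t ^ 5 < 0 := div_neg_of_pos_of_neg hd h5
    have : 24 * (d / t ^ 5) < 0 := by linarith
    exact mul_neg_of_neg_of_pos this hQ
end
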